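/- Let M and J be bounded self-adjoint operators and Φ₁, …, Φ_n (n ≥ 1) bounded operators on a complex Hilbert space H. For m ≥ 1, a real c and a bounded operator B, set K^{(m)}(cM, B) := ∫_{Δ_m} exp(i(1−u₁)cM) B exp(i(u₁−u₂)cM) B ⋯ B exp(iu_m cM) du (m copies of B), and for N ≥ 1 and bounded operators c₁,…,c_N set K^{(N)}(M : c₁,…,c_N) := ∫_{Δ_N} exp(i(1−u₁)M) c₁ exp(i(u₁−u₂)M) c₂ ⋯ c_N exp(iu_N M) du. Let α₁, …, α_{n+1} be positive integers, put σ_j := α₁ + ⋯ + α_j + j for 1 ≤ j ≤ n+1 and N := σ_{n+1} − 1, and define c_m := Φ_j if m = σ_j for some j ≤ n, and c_m := J otherwise. Then, with w₀ := 1: K^{(N)}(M : c₁,…,c_N) = ∫_{Δ_n} (∏_{j=1}^{n} (w_{j−1} − w_j)^{α_j}) · w_n^{α_{n+1}} · K^{(α₁)}((1−w₁)M, J) Φ₁ K^{(α₂)}((w₁−w₂)M, J) Φ₂ ⋯ Φ_n K^{(α_{n+1})}(w_n M, J) dw. (The paper's change-of-variables proposition for Duhamel simplex kernels with insertions, stated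 for bounded M; the inner kernels K^{(α_j)} have M scaled by the increment of w but the same unscaled J's.) -/

import Mathlib

set_option linter.unusedSectionVars false
set_option maxHeartbeats 1000000


open MeasureTheory

/-- The simplex `Δ_n = {u ∈ ℝⁿ : 1 ≥ u₁ ≥ u₂ ≥ ⋯ ≥ u_n ≥ 0}`. -/
def simplex (n : ℕ) : Set (Fin n → ℝ) :=
  {u | (∀ i, u i ∈ Set.Icc (0:ℝ) 1) ∧ ∀ i j : Fin n, i ≤ j → u j ≤ u i}

variable {H : Type*} [NormedAddCommGroup H] [InnerProductSpace ℂ H] [CompleteSpace H]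

/-- The ordered product `exp(i(1−u₁)M) c₁ exp(i(u₁−u₂)M) c₂ ⋯ c_n exp(iu_n M)`. -/
noncomputable def duhamelIntegrand {n : ℕ} (M : H →L[ℂ] H) (c : Fin n → (H →L[ℂ] H))
    (u : Fin n → ℝ) : H →L[ℂ] H :=
  NormedSpace.exp
      ((Complex.I * ((1 - (if h : 0 < n then u ⟨0, h⟩ else 0) : ℝ) : ℂ)) • M) *
    (List.ofFn fun m : Fin n =>
      c m *
        NormedSpace.exp
          ((Complex.I *
            ((u m - (if h : (m : ℕ) + 1 < n then u ⟨(m : ℕ) + 1, h⟩ else 0) : ℝ) : ℂ)) •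
              M)).prod

/-- The Duhamel simplex kernel `K^{(n)}(M : c₁,…,c_n)`; taking all `cᵢ = B` gives
`K^{(n)}(M, B)`, and `K^{(n)}(aM, B)` is obtained by scaling `M`. -/
noncomputable def duhamelKernel (n : ℕ) (M : H →L[ℂ] H) (c : Fin n → (H →L[ℂ] H)) :
    H →L[ℂ] H :=
  ∫ u in simplex n, duhamelIntegrand M c u

/-- `σ_j = α₁ + ⋯ + α_j + j` (for `j = 1, …, n+1`, indexed here by `Fin (n+1)`). -/
def sigmaIdx {n : ℕ} (α : Fin (n + 1) → ℕ) (j : Fin (n + 1)) : ℕ :=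
  (∑ i ∈ Finset.Iic j, α i) + (j : ℕ) + 1



open MeasureTheory intervalIntegral

noncomputable section

variable {E : Type*} [NormedAddCommGroup E] [NormedSpace ℝ E] [CompleteSpace E]

/-- truncated simplex -/
def simplexT (n : ℕ) (t : ℝ) : Set (Fin n → ℝ) :=
  {u | (∀ i, u i ∈ Set.Icc (0:ℝ) t) ∧ ∀ i j : Fin n, i ≤ j → u j ≤ u i}

lemma isClosed_simplexT (n : ℕ) (t : ℝ) : IsClosed (simplexT n t) := by
  have h1 : IsClosed {u : Fin n → ℝ | ∀ i, u i ∈ Set.Icc (0:ℝ) t} := by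
    have : {u : Fin n → ℝ | ∀ i, u i ∈ Set.Icc (0:ℝ) t} = ⋂ i, {u | u i ∈ Set.Icc (0:ℝ) t} := by
      ext u; simp
    rw [this]
    exact isClosed_iInter fun i => (isClosed_Icc).preimage (continuous_apply i)
  have h2 : IsClosed {u : Fin n → ℝ | ∀ i j : Fin n, i ≤ j → u j ≤ u i} := by
    have : {u : Fin n → ℝ | ∀ i j : Fin n, i ≤ j → u j ≤ u i} =
        ⋂ (i) (j) (_ : i ≤ j), {u : Fin n → ℝ | u j ≤ u i} := by
      ext u; simp
    rw [this]
    exact isClosed_iInter fun i => isClosed_iInter fun j => isClosed_iInter fun _ =>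
      isClosed_le (continuous_apply j) (continuous_apply i)
  exact h1.inter h2

lemma isCompact_simplexT (n : ℕ) (t : ℝ) : IsCompact (simplexT n t) := by
  have hsub : simplexT n t ⊆ Set.Icc (fun _ => 0) (fun _ => t) := by
    intro u hu
    constructor <;> intro i
    · exact (hu.1 i).1
    · exact (hu.1 i).2
  exact (isCompact_Icc).of_isClosed_subset (isClosed_simplexT n t) hsub

lemma measurableSet_simplexT (n : ℕ) (t : ℝ) : MeasurableSet (simplexT n t) :=
  (isClosed_simplexT n t).measurableSet

/-- iterated integral over the truncated simplex -/
def iterInt : (n : ℕ) → ℝ → ((Fin n → ℝ) → E) → E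
  | 0, _, F => F ![]
  | n+1, t, F => ∫ s in (0:ℝ)..t, iterInt n s (fun v => F (Fin.cons s v))

lemma continuous_finCons (n : ℕ) :
    Continuous (fun p : ℝ × (Fin n → ℝ) => Fin.cons p.1 p.2 : _ → Fin (n+1) → ℝ) := by
  apply continuous_pi
  intro i
  refine Fin.cases ?_ ?_ i
  · simpa using continuous_fst
  · intro j
    simpa [Function.comp_def] using (continuous_apply j).comp continuous_snd

lemma iterInt_continuous {X : Type*} [TopologicalSpace X] :
    ∀ (n : ℕ) (F : X → (Fin n → ℝ) → E), Continuous (Function.uncurry F) →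
      Continuous (fun p : X × ℝ => iterInt n p.2 (F p.1))
  | 0, F, hF => by
    simp only [iterInt]
    exact hF.comp (continuous_fst.prodMk continuous_const)
  | n+1, F, hF => by
    simp only [iterInt]
    have hG : Continuous (Function.uncurry
        (fun (q : X × ℝ) (v : Fin n → ℝ) => F q.1 (Fin.cons q.2 v))) := by
      show Continuous fun qv : (X × ℝ) × (Fin n → ℝ) => F qv.1.1 (Fin.cons qv.1.2 qv.2)
      exact hF.comp ((continuous_fst.comp continuous_fst).prodMk
        ((continuous_finCons n).comp ((continuous_snd.comp continuous_fst).prodMk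
          continuous_snd)))
    have IH := iterInt_continuous n (fun (q : X × ℝ) (v : Fin n → ℝ) => F q.1 (Fin.cons q.2 v)) hG
    have h : Continuous (fun q : X × ℝ => iterInt n q.2 (fun v => F q.1 (Fin.cons q.2 v))) :=
      IH.comp (continuous_id.prodMk continuous_snd)
    exact continuous_parametric_intervalIntegral_of_continuous
      (f := fun (q : X × ℝ) (s : ℝ) => iterInt n s (fun v => F q.1 (Fin.cons s v)))
      (by show Continuous fun p : (X × ℝ) × ℝ => iterInt n p.2 (fun v => F p.1.1 (Fin.cons p.2 v))
          exact h.comp ((continuous_fst.comp continuous_fst).prodMk continuous_snd))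
      continuous_snd

lemma iterInt_continuous' (n : ℕ) (F : ℝ × (Fin n → ℝ) → E) (hF : Continuous F) :
    Continuous (fun t : ℝ => iterInt n t (fun v => F (t, v))) := by
  have := iterInt_continuous (X := ℝ) n (fun t v => F (t, v)) hF
  exact this.comp (Continuous.prodMk continuous_id continuous_id)

/-- pull a continuous linear map out of the iterated integral -/
lemma iterInt_clm (L : E →L[ℝ] E) :
    ∀ (n : ℕ) (t : ℝ) (F : (Fin n → ℝ) → E), Continuous F →
      iterInt n t (fun v => L (F v)) = L (iterInt n t F)
  | 0, t, F, _ => by simp [iterInt]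
  | n+1, t, F, hF => by
    simp only [iterInt]
    have key : ∀ s : ℝ, iterInt n s (fun v => L (F (Fin.cons s v)))
        = L (iterInt n s (fun v => F (Fin.cons s v))) := by
      intro s
      exact iterInt_clm L n s _ (hF.comp ((continuous_finCons n).comp
        (Continuous.prodMk continuous_const continuous_id)))
    simp only [key]
    rw [ContinuousLinearMap.intervalIntegral_comp_comm]
    have : Continuous (fun s : ℝ => iterInt n s (fun v => F (Fin.cons s v))) := by
      have := iterInt_continuous' n (fun p => F (Fin.cons p.1 p.2))
        (hF.comp (continuous_finCons n))
      exact this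
    exact this.intervalIntegrable _ _
end
set_option linter.unusedSectionVars false

section Tri
variable {E : Type*} [NormedAddCommGroup E] [NormedSpace ℝ E] [CompleteSpace E]

lemma triangle_swap (f : ℝ → ℝ → E) (hf : Continuous (Function.uncurry f)) {t : ℝ}
    (ht : 0 ≤ t) :
    ∫ s₁ in (0:ℝ)..t, ∫ s in (0:ℝ)..s₁, f s₁ s = ∫ s in (0:ℝ)..t, ∫ s₁ in s..t, f s₁ s := by
  obtain ⟨C, hC⟩ : ∃ C, ∀ p ∈ Set.Icc (0:ℝ) t ×ˢ Set.Icc (0:ℝ) t, ‖Function.uncurry f p‖ ≤ C :=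
    (isCompact_Icc.prod isCompact_Icc).exists_bound_of_continuousOn hf.continuousOn
  set g : ℝ × ℝ → E := Set.indicator {p : ℝ × ℝ | p.2 ≤ p.1} (Function.uncurry f) with hg
  have hmeas : MeasurableSet {p : ℝ × ℝ | p.2 ≤ p.1} :=
    (isClosed_le continuous_snd continuous_fst).measurableSet
  haveI : IsFiniteMeasure ((volume : Measure ℝ).restrict (Set.Ioc 0 t)) := by
    constructor
    rw [Measure.restrict_apply_univ, Real.volume_Ioc]
    exact ENNReal.ofReal_lt_top
  have hint : MeasureTheory.Integrable g
      (((volume : Measure ℝ).restrict (Set.Ioc 0 t)).prod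
        ((volume : Measure ℝ).restrict (Set.Ioc 0 t))) := by
    refine MeasureTheory.Integrable.mono' (MeasureTheory.integrable_const C)
      (hf.aestronglyMeasurable.indicator hmeas) ?_
    rw [MeasureTheory.Measure.prod_restrict]
    filter_upwards [MeasureTheory.ae_restrict_mem (measurableSet_Ioc.prod measurableSet_Ioc)]
      with p hp
    calc ‖g p‖ ≤ ‖Function.uncurry f p‖ := norm_indicator_le_norm_self _ _
    _ ≤ C := hC p ⟨Set.Ioc_subset_Icc_self hp.1, Set.Ioc_subset_Icc_self hp.2⟩
  have key := MeasureTheory.integral_integral_swap (f := fun s₁ s => g (s₁, s)) hint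
  calc ∫ s₁ in (0:ℝ)..t, ∫ s in (0:ℝ)..s₁, f s₁ s
      = ∫ s₁ in Set.Ioc (0:ℝ) t, ∫ s in Set.Ioc (0:ℝ) t, g (s₁, s) := by
        rw [intervalIntegral.integral_of_le ht]
        refine MeasureTheory.setIntegral_congr_fun measurableSet_Ioc fun s₁ hs₁ => ?_
        rw [intervalIntegral.integral_of_le hs₁.1.le]
        have : Set.Ioc (0:ℝ) s₁ = Set.Ioc (0:ℝ) t ∩ Set.Iic s₁ := by
          ext x; simp only [Set.mem_Ioc, Set.mem_inter_iff, Set.mem_Iic]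
          exact ⟨fun h => ⟨⟨h.1, h.2.trans hs₁.2⟩, h.2⟩, fun h => ⟨h.1.1, h.2⟩⟩
        rw [this, ← MeasureTheory.setIntegral_indicator measurableSet_Iic]
        refine MeasureTheory.setIntegral_congr_fun measurableSet_Ioc fun s _ => ?_
        simp only [g, Set.indicator, Set.mem_Iic, Set.mem_setOf_eq]; rfl
    _ = ∫ s in Set.Ioc (0:ℝ) t, ∫ s₁ in Set.Ioc (0:ℝ) t, g (s₁, s) := key
    _ = ∫ s in (0:ℝ)..t, ∫ s₁ in s..t, f s₁ s := by
        rw [intervalIntegral.integral_of_le ht]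
        refine MeasureTheory.setIntegral_congr_fun measurableSet_Ioc fun s hs => ?_
        rw [intervalIntegral.integral_of_le hs.2]
        have h1 : ∀ s₁, g (s₁, s) = Set.indicator (Set.Ici s) (fun s₁ => f s₁ s) s₁ := by
          intro s₁
          simp only [g, Set.indicator, Set.mem_Ici, Set.mem_setOf_eq]; rfl
        simp only [h1]
        rw [MeasureTheory.setIntegral_indicator measurableSet_Ici]
        have : Set.Ioc (0:ℝ) t ∩ Set.Ici s = Set.Icc s t := by
          ext x; simp only [Set.mem_Ioc, Set.mem_inter_iff, Set.mem_Ici, Set.mem_Icc]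
          exact ⟨fun h => ⟨h.2, h.1.2⟩, fun h => ⟨⟨lt_of_lt_of_le hs.1 h.1, h.2⟩, h.1⟩⟩
        rw [this, MeasureTheory.integral_Icc_eq_integral_Ioc]
end Tri

section OpKernel

variable {H : Type*} [NormedAddCommGroup H] [InnerProductSpace ℂ H] [CompleteSpace H]

local notation "Op" => H →L[ℂ] H

/-- `exp(itM)` -/
noncomputable def eM (M : Op) (t : ℝ) : Op :=
  NormedSpace.exp ((Complex.I * (t : ℂ)) • M)

lemma eM_continuous (M : Op) : Continuous (eM M) := by
  letI : NormedAlgebra ℚ Op := NormedAlgebra.restrictScalars ℚ ℂ Op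
  apply NormedSpace.exp_continuous.comp
  exact (continuous_const.mul (Complex.continuous_ofReal)).smul continuous_const

lemma eM_smul (M : Op) (a t : ℝ) : eM M (a * t) = eM (a • M) t := by
  unfold eM
  congr 1
  push_cast
  rw [smul_comm ((Complex.I * (t:ℂ))) a M, ← algebraMap_smul ℂ a ((Complex.I * (t:ℂ)) • M),
    smul_smul]
  congr 1
  simp [Complex.coe_algebraMap]
  ring

/-- iterated Duhamel kernel with top `t` -/
noncomputable def Kt (M : Op) : List Op → ℝ → Op
  | [], t => eM M t
  | c :: cs, t => ∫ s in (0:ℝ)..t, (eM M (t - s) * c) * Kt M cs s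

lemma Kt_nil (M : Op) (t : ℝ) : Kt M [] t = eM M t := rfl

lemma Kt_cons (M : Op) (c : Op) (cs : List Op) (t : ℝ) :
    Kt M (c :: cs) t = ∫ s in (0:ℝ)..t, (eM M (t - s) * c) * Kt M cs s := rfl

lemma Kt_continuous (M : Op) : ∀ cs : List Op, Continuous (Kt M cs)
  | [] => eM_continuous M
  | c :: cs => by
    have IH := Kt_continuous M cs
    have heq : (Kt M (c :: cs)) = fun t => ∫ s in (0:ℝ)..t, (eM M (t - s) * c) * Kt M cs s :=
      funext fun t => Kt_cons M c cs t
    rw [heq]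
    exact intervalIntegral.continuous_parametric_intervalIntegral_of_continuous
      (f := fun (t : ℝ) (s : ℝ) => (eM M (t - s) * c) * Kt M cs s)
      (by show Continuous fun p : ℝ × ℝ => (eM M (p.1 - p.2) * c) * Kt M cs p.2
          apply Continuous.mul
          · exact ((eM_continuous M).comp (continuous_fst.sub continuous_snd)).mul
              continuous_const
          · exact IH.comp continuous_snd)
      continuous_id

lemma Kt_zero_of_ne_nil (M : Op) (c : Op) (cs : List Op) : Kt M (c :: cs) 0 = 0 := by
  simp [Kt_cons]

/-- scaling lemma -/
lemma Kt_scale (M : Op) : ∀ (cs : List Op) (a t : ℝ), 0 ≤ a →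
    Kt M cs (a * t) = a ^ cs.length • Kt (a • M) cs t
  | [], a, t, _ => by simp [Kt_nil, eM_smul]
  | c :: cs, a, t, ha => by
    rcases eq_or_lt_of_le ha with rfl | hpos
    · rw [zero_mul, Kt_zero_of_ne_nil]
      rw [List.length_cons, pow_succ, mul_zero, zero_smul]
    · have hne : a ≠ 0 := ne_of_gt hpos
      rw [Kt_cons]
      have key : (∫ s in (0:ℝ)..(a*t), (eM M (a * t - s) * c) * Kt M cs s)
          = a • ∫ σ in (0:ℝ)..t, (eM M (a * t - a * σ) * c) * Kt M cs (a * σ) := by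
        rw [intervalIntegral.integral_comp_mul_left
          (fun s => (eM M (a * t - s) * c) * Kt M cs s) hne, mul_zero,
          smul_inv_smul₀ hne]
      rw [key]
      have hcong : ∀ σ : ℝ, (eM M (a * t - a * σ) * c) * Kt M cs (a * σ)
          = a ^ cs.length • ((eM (a • M) (t - σ) * c) * Kt (a • M) cs σ) := by
        intro σ
        rw [← mul_sub, eM_smul, Kt_scale M cs a σ ha, mul_smul_comm]
      simp only [hcong]
      rw [intervalIntegral.integral_smul, Kt_cons, smul_smul, List.length_cons, pow_succ]
      ring_nf

end OpKernel
section OpKernel2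

variable {H : Type*} [NormedAddCommGroup H] [InnerProductSpace ℂ H] [CompleteSpace H]

local notation "Op" => H →L[ℂ] H

lemma interval_mul_left (A : Op) (f : ℝ → Op) (hf : Continuous f) (a b : ℝ) :
    ∫ s in a..b, A * f s = A * ∫ s in a..b, f s := by
  have := (ContinuousLinearMap.mul ℝ Op A).intervalIntegral_comp_comm
    (hf.intervalIntegrable a b) (μ := volume)
  simpa using this

lemma interval_mul_right (B : Op) (f : ℝ → Op) (hf : Continuous f) (a b : ℝ) :
    ∫ s in a..b, f s * B = (∫ s in a..b, f s) * B := by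
  have := ((ContinuousLinearMap.mul ℝ Op).flip B).intervalIntegral_comp_comm
    (hf.intervalIntegrable a b) (μ := volume)
  simpa using this

lemma Kt_peel (M J Φ : Op) (rest : List Op) : ∀ (a : ℕ) (t : ℝ), 0 ≤ t →
    Kt M (List.replicate a J ++ Φ :: rest) t
      = ∫ s in (0:ℝ)..t, (Kt M (List.replicate a J) (t - s) * Φ) * Kt M rest s
  | 0, t, ht => by
    simp only [List.replicate, List.nil_append]
    rw [Kt_cons]
    apply intervalIntegral.integral_congr
    intro s _
    dsimp only
    rw [Kt_nil]
  | a+1, t, ht => by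
    rw [List.replicate_succ, List.cons_append, Kt_cons]
    have hKrep := Kt_continuous M (List.replicate a J)
    have hKrest := Kt_continuous M rest
    have step1 : ∫ s₁ in (0:ℝ)..t,
          (eM M (t - s₁) * J) * Kt M (List.replicate a J ++ Φ :: rest) s₁
        = ∫ s₁ in (0:ℝ)..t, ∫ s in (0:ℝ)..s₁,
            ((eM M (t - s₁) * J) * Kt M (List.replicate a J) (s₁ - s)) * (Φ * Kt M rest s) := by
      apply intervalIntegral.integral_congr
      intro s₁ hs₁
      rw [Set.uIcc_of_le ht] at hs₁
      dsimp only
      rw [Kt_peel M J Φ rest a s₁ hs₁.1]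
      rw [← interval_mul_left (eM M (t - s₁) * J)
        (fun s => (Kt M (List.replicate a J) (s₁ - s) * Φ) * Kt M rest s)
        (((hKrep.comp (continuous_const.sub continuous_id)).mul continuous_const).mul hKrest)]
      apply intervalIntegral.integral_congr
      intro s _
      dsimp only
      rw [mul_assoc (eM M (t - s₁) * J), mul_assoc (Kt M (List.replicate a J) (s₁ - s)),
        ← mul_assoc (eM M (t - s₁) * J)]
    rw [step1]
    rw [triangle_swap
      (f := fun s₁ s => ((eM M (t - s₁) * J) * Kt M (List.replicate a J) (s₁ - s))
        * (Φ * Kt M rest s))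
      (by apply Continuous.mul
          · apply Continuous.mul
            · exact ((eM_continuous M).comp (continuous_const.sub continuous_fst)).mul
                continuous_const
            · exact hKrep.comp (continuous_fst.sub continuous_snd)
          · exact continuous_const.mul (hKrest.comp continuous_snd)) ht]
    apply intervalIntegral.integral_congr
    intro s hs
    rw [Set.uIcc_of_le ht] at hs
    dsimp only
    rw [interval_mul_right (Φ * Kt M rest s)
      (fun s₁ => (eM M (t - s₁) * J) * Kt M (List.replicate a J) (s₁ - s))
      (((eM_continuous M).comp (continuous_const.sub continuous_id)).mul continuous_const
        |>.mul (hKrep.comp (continuous_id.sub continuous_const)))]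
    have harg : ∀ s₁ : ℝ, (eM M (t - s₁) * J) * Kt M (List.replicate a J) (s₁ - s)
        = (fun σ => (eM M ((t - s) - σ) * J) * Kt M (List.replicate a J) σ) (s₁ - s) := by
      intro s₁
      dsimp only
      congr 2
      ring
    simp only [harg]
    rw [intervalIntegral.integral_comp_sub_right
      (fun σ => (eM M ((t - s) - σ) * J) * Kt M (List.replicate a J) σ) s, sub_self]
    rw [Kt_cons, mul_assoc]

/-- concatenated block list `J^{a₁} Φ₁ J^{a₂} Φ₂ ⋯ Φ_n J^{b}` -/
def blockConcat (J : Op) : List (ℕ × Op) → ℕ → List Op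
  | [], b => List.replicate b J
  | aΦ :: L, b => List.replicate aΦ.1 J ++ aΦ.2 :: blockConcat J L b

/-- iterated form of the right-hand side -/
noncomputable def RKt (M J : Op) : List (ℕ × Op) → ℕ → ℝ → Op
  | [], b, t => Kt M (List.replicate b J) t
  | aΦ :: L, b, t => ∫ s in (0:ℝ)..t,
      (Kt M (List.replicate aΦ.1 J) (t - s) * aΦ.2) * RKt M J L b s

lemma RKt_continuous (M J : Op) : ∀ (L : List (ℕ × Op)) (b : ℕ),
    Continuous (RKt M J L b)
  | [], b => Kt_continuous M (List.replicate b J)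
  | aΦ :: L, b => by
    have IH := RKt_continuous M J L b
    have heq : RKt M J (aΦ :: L) b = fun t => ∫ s in (0:ℝ)..t,
        (Kt M (List.replicate aΦ.1 J) (t - s) * aΦ.2) * RKt M J L b s := rfl
    rw [heq]
    exact intervalIntegral.continuous_parametric_intervalIntegral_of_continuous
      (f := fun (t : ℝ) (s : ℝ) => (Kt M (List.replicate aΦ.1 J) (t - s) * aΦ.2)
        * RKt M J L b s)
      (by show Continuous fun p : ℝ × ℝ =>
            (Kt M (List.replicate aΦ.1 J) (p.1 - p.2) * aΦ.2) * RKt M J L b p.2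
          exact (((Kt_continuous M _).comp (continuous_fst.sub continuous_snd)).mul
            continuous_const).mul (IH.comp continuous_snd))
      continuous_id

lemma Kt_blockConcat (M J : Op) : ∀ (L : List (ℕ × Op)) (b : ℕ) (t : ℝ), 0 ≤ t →
    Kt M (blockConcat J L b) t = RKt M J L b t
  | [], _, _, _ => rfl
  | aΦ :: L, b, t, ht => by
    show Kt M (List.replicate aΦ.1 J ++ aΦ.2 :: blockConcat J L b) t = _
    rw [Kt_peel M J aΦ.2 (blockConcat J L b) aΦ.1 t ht]
    show _ = ∫ s in (0:ℝ)..t, (Kt M (List.replicate aΦ.1 J) (t - s) * aΦ.2) * RKt M J L b s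
    apply intervalIntegral.integral_congr
    intro s hs
    rw [Set.uIcc_of_le ht] at hs
    dsimp only
    rw [Kt_blockConcat M J L b s hs.1]

end OpKernel2
section Lemma1

variable {E : Type*} [NormedAddCommGroup E] [NormedSpace ℝ E] [CompleteSpace E]

lemma cons_mem_simplexT_iff {n : ℕ} {t s : ℝ} {v : Fin n → ℝ} :
    Fin.cons s v ∈ simplexT (n+1) t ↔ s ∈ Set.Icc 0 t ∧ v ∈ simplexT n s := by
  constructor
  · rintro ⟨h1, h2⟩
    refine ⟨by simpa using h1 0, ⟨fun i => ?_, fun i j hij => ?_⟩⟩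
    · refine ⟨by simpa using (h1 i.succ).1, ?_⟩
      have := h2 0 i.succ (Fin.zero_le _)
      simpa using this
    · have := h2 i.succ j.succ (by rwa [Fin.succ_le_succ_iff])
      simpa using this
  · rintro ⟨hs, hv1, hv2⟩
    constructor
    · intro i
      refine Fin.cases ?_ (fun i => ?_) i
      · simpa using hs
      · simp only [Fin.cons_succ]
        exact ⟨(hv1 i).1, le_trans (hv1 i).2 hs.2⟩
    · intro i j hij
      refine Fin.cases ?_ (fun j' hij => ?_) j hij
      · intro hi0
        have : i = 0 := le_antisymm hi0 (Fin.zero_le _)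
        rw [this]
      · refine Fin.cases ?_ (fun i' hij => ?_) i hij
        · simpa using (hv1 j').2
        · simp only [Fin.cons_succ]
          exact hv2 i' j' (by rwa [Fin.succ_le_succ_iff] at hij)

lemma setIntegral_simplexT :
    ∀ (n : ℕ) (t : ℝ), 0 ≤ t → ∀ (F : (Fin n → ℝ) → E), Continuous F →
      ∫ u in simplexT n t, F u = iterInt n t F
  | 0, t, ht, F, hF => by
    have huniv : simplexT 0 t = Set.univ := by
      ext u; simp [simplexT]
    rw [huniv, MeasureTheory.setIntegral_univ, MeasureTheory.integral_unique]
    have h1 : (volume (Set.univ : Set (Fin 0 → ℝ))) = 1 := by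
      rw [MeasureTheory.volume_pi, MeasureTheory.Measure.pi_univ]
      simp
    rw [measureReal_def, h1]
    simp only [ENNReal.toReal_one, one_smul, iterInt]
    exact congrArg F (Subsingleton.elim _ _)
  | n+1, t, ht, F, hF => by
    classical
    set G : ℝ × (Fin n → ℝ) → E := fun p => F (Fin.cons p.1 p.2) with hGdef
    have hG : Continuous G := hF.comp (continuous_finCons n)
    set A : Set (ℝ × (Fin n → ℝ)) :=
      (fun p : ℝ × (Fin n → ℝ) => (Fin.cons p.1 p.2 : Fin (n+1) → ℝ)) ⁻¹' simplexT (n+1) t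
      with hAdef
    have hAchar : ∀ p : ℝ × (Fin n → ℝ),
        p ∈ A ↔ p.1 ∈ Set.Icc 0 t ∧ p.2 ∈ simplexT n p.1 := by
      rintro ⟨s, v⟩
      exact cons_mem_simplexT_iff
    have hAclosed : IsClosed A :=
      (isClosed_simplexT (n+1) t).preimage (continuous_finCons n)
    have hAmeas : MeasurableSet A := hAclosed.measurableSet
    -- step 1 : transfer to the product space
    have MP := (MeasureTheory.measurePreserving_piFinSuccAbove
      (fun _ : Fin (n+1) => (volume : Measure ℝ)) 0).symm
    have hemb := (MeasurableEquiv.piFinSuccAbove (fun _ : Fin (n+1) => ℝ) 0).symm.measurableEmbedding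
    have step1 : ∫ u in simplexT (n+1) t, F u
        = ∫ p in A, G p ∂((volume : Measure ℝ).prod (Measure.pi fun _ : Fin n => volume)) := by
      rw [MeasureTheory.volume_pi]
      rw [← MP.setIntegral_preimage_emb hemb F (simplexT (n+1) t)]
      have hsymm : ∀ p : ℝ × (Fin n → ℝ),
          (MeasurableEquiv.piFinSuccAbove (fun _ : Fin (n+1) => ℝ) 0).symm p
            = Fin.cons p.1 p.2 := by
        rintro ⟨s, v⟩
        simp [MeasurableEquiv.piFinSuccAbove, Fin.insertNthEquiv, Fin.insertNth_zero]
      have hpre : (MeasurableEquiv.piFinSuccAbove (fun _ : Fin (n+1) => ℝ) 0).symm ⁻¹'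
          (simplexT (n+1) t) = A := by
        ext p
        rw [Set.mem_preimage, hsymm p]
        rfl
      rw [hpre]
      apply MeasureTheory.setIntegral_congr_fun hAmeas
      intro p _
      dsimp only
      rw [hsymm p]
    -- boundedness
    obtain ⟨C, hC⟩ : ∃ C, ∀ p ∈ Set.Icc (0:ℝ) t ×ˢ
        Set.Icc (fun _ => (0:ℝ)) (fun _ => t), ‖G p‖ ≤ C :=
      (isCompact_Icc.prod isCompact_Icc).exists_bound_of_continuousOn hG.continuousOn
    have hAsub : A ⊆ Set.Icc (0:ℝ) t ×ˢ Set.Icc (fun _ => (0:ℝ)) (fun _ => t) := by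
      rintro ⟨s, v⟩ hp
      obtain ⟨hs, hv⟩ := (hAchar _).1 hp
      exact ⟨hs, fun i => (hv.1 i).1, fun i => le_trans (hv.1 i).2 hs.2⟩
    -- integrability of the indicator
    have hbound : MeasureTheory.Integrable
        (Set.indicator (Set.Icc (0:ℝ) t ×ˢ Set.Icc (fun _ => (0:ℝ)) (fun _ => t))
          (fun _ => C))
        ((volume : Measure ℝ).prod (Measure.pi fun _ : Fin n => volume)) := by
      rw [MeasureTheory.integrable_indicator_iff (measurableSet_Icc.prod measurableSet_Icc)]
      refine MeasureTheory.integrableOn_const (ne_of_lt ?_) (by simp)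
      rw [MeasureTheory.Measure.prod_prod]
      apply ENNReal.mul_lt_top
      · rw [Real.volume_Icc]; exact ENNReal.ofReal_lt_top
      · rw [← MeasureTheory.volume_pi, Real.volume_Icc_pi]
        exact ENNReal.prod_lt_top (fun i _ => ENNReal.ofReal_lt_top)
    have hint : MeasureTheory.Integrable (Set.indicator A G)
        ((volume : Measure ℝ).prod (Measure.pi fun _ : Fin n => volume)) := by
      refine hbound.mono' (hG.aestronglyMeasurable.indicator hAmeas) ?_
      filter_upwards with p
      by_cases hp : p ∈ A
      · rw [Set.indicator_of_mem hp, Set.indicator_of_mem (hAsub hp)]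
        exact hC p (hAsub hp)
      · rw [Set.indicator_of_notMem hp]
        simp only [norm_zero]
        by_cases hp2 : p ∈ Set.Icc (0:ℝ) t ×ˢ Set.Icc (fun _ => (0:ℝ)) (fun _ => t)
        · rw [Set.indicator_of_mem hp2]
          exact le_trans (norm_nonneg (G p)) (hC p hp2)
        · rw [Set.indicator_of_notMem hp2]
    -- Fubini
    have step2 : ∫ p in A, G p ∂((volume : Measure ℝ).prod (Measure.pi fun _ : Fin n => volume))
        = ∫ s : ℝ, ∫ v : Fin n → ℝ, Set.indicator A G (s, v)
            ∂(Measure.pi fun _ : Fin n => volume) ∂(volume : Measure ℝ) := by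
      rw [← MeasureTheory.integral_indicator hAmeas]
      exact MeasureTheory.integral_prod _ hint
    have step3 : ∀ s : ℝ, (∫ v : Fin n → ℝ, Set.indicator A G (s, v)
          ∂(Measure.pi fun _ : Fin n => volume))
        = Set.indicator (Set.Icc (0:ℝ) t)
            (fun s => ∫ v in simplexT n s, F (Fin.cons s v)) s := by
      intro s
      by_cases hs : s ∈ Set.Icc (0:ℝ) t
      · rw [Set.indicator_of_mem hs]
        have : ∀ v : Fin n → ℝ, Set.indicator A G (s, v)
            = Set.indicator (simplexT n s) (fun v => F (Fin.cons s v)) v := by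
          intro v
          by_cases hv : v ∈ simplexT n s
          · rw [Set.indicator_of_mem ((hAchar (s, v)).2 ⟨hs, hv⟩), Set.indicator_of_mem hv]
          · rw [Set.indicator_of_notMem, Set.indicator_of_notMem hv]
            intro hmem
            exact hv ((hAchar (s, v)).1 hmem).2
        simp only [this]
        rw [MeasureTheory.integral_indicator (measurableSet_simplexT n s)]
        rw [← MeasureTheory.volume_pi]
      · rw [Set.indicator_of_notMem hs]
        have : ∀ v : Fin n → ℝ, Set.indicator A G (s, v) = 0 := by
          intro v
          rw [Set.indicator_of_notMem]
          intro hmem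
          exact hs ((hAchar (s, v)).1 hmem).1
        simp only [this, MeasureTheory.integral_zero]
    rw [step1, step2]
    simp only [step3]
    rw [MeasureTheory.integral_indicator measurableSet_Icc,
      MeasureTheory.integral_Icc_eq_integral_Ioc, ← intervalIntegral.integral_of_le ht]
    show _ = iterInt (n+1) t F
    simp only [iterInt]
    apply intervalIntegral.integral_congr
    intro s hs
    rw [Set.uIcc_of_le ht] at hs
    exact setIntegral_simplexT n s hs.1 (fun v => F (Fin.cons s v))
      (hF.comp ((continuous_finCons n).comp (Continuous.prodMk continuous_const continuous_id)))

end Lemma1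
section Bridge

variable {H : Type*} [NormedAddCommGroup H] [InnerProductSpace ℂ H] [CompleteSpace H]

local notation "Op" => H →L[ℂ] H

lemma continuous_ofFn_prod {β : Type*} [TopologicalSpace β] {n : ℕ} (g : Fin n → β → Op)
    (hg : ∀ m, Continuous (g m)) :
    Continuous fun v => (List.ofFn fun m => g m v).prod := by
  have h : ∀ v, (List.ofFn fun m => g m v) = (List.finRange n).map fun m => g m v := by
    intro v; rw [List.ofFn_eq_map]
  simp only [h]
  exact continuous_list_prod _ (fun i _ => hg i)

lemma iterInt_const_mul (A : Op) (n : ℕ) (t : ℝ) (F : (Fin n → ℝ) → Op)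
    (hF : Continuous F) :
    iterInt n t (fun v => A * F v) = A * iterInt n t F := by
  have := iterInt_clm (ContinuousLinearMap.mul ℝ Op A) n t F hF
  simpa using this

/-- duhamelIntegrand with general top `t` -/
noncomputable def dIntegrandT {n : ℕ} (M : Op) (c : Fin n → Op) (t : ℝ)
    (u : Fin n → ℝ) : Op :=
  eM M (t - (if h : 0 < n then u ⟨0, h⟩ else 0)) *
    (List.ofFn fun m : Fin n =>
      c m * eM M (u m - (if h : (m : ℕ) + 1 < n then u ⟨(m : ℕ) + 1, h⟩ else 0))).prod

lemma duhamelIntegrand_eq_dIntegrandT {n : ℕ} (M : Op) (c : Fin n → Op) (u : Fin n → ℝ) :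
    duhamelIntegrand M c u = dIntegrandT M c 1 u := by
  unfold duhamelIntegrand dIntegrandT eM
  norm_cast

lemma cons_mk_succ {n : ℕ} (s : ℝ) (v : Fin n → ℝ) (k : ℕ) (h : k + 1 < n + 1) :
    (Fin.cons s v : Fin (n+1) → ℝ) ⟨k+1, h⟩ = v ⟨k, Nat.lt_of_succ_lt_succ h⟩ := rfl

lemma dIntegrandT_continuous {n : ℕ} (M : Op) (c : Fin n → Op) (t : ℝ) :
    Continuous (dIntegrandT M c t) := by
  unfold dIntegrandT
  apply Continuous.mul
  · apply (eM_continuous M).comp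
    apply continuous_const.sub
    by_cases h : 0 < n
    · simp only [dif_pos h]
      exact continuous_apply _
    · simp only [dif_neg h]
      exact continuous_const
  · apply continuous_ofFn_prod
    intro m
    apply continuous_const.mul
    apply (eM_continuous M).comp
    apply (continuous_apply _).sub
    by_cases h : (m : ℕ) + 1 < n
    · simp only [dif_pos h]
      exact continuous_apply _
    · simp only [dif_neg h]
      exact continuous_const

lemma dIntegrandT_cons {n : ℕ} (M : Op) (c : Fin (n+1) → Op) (t s : ℝ) (v : Fin n → ℝ) :
    dIntegrandT M c t (Fin.cons s v)
      = (eM M (t - s) * c 0) * dIntegrandT M (fun i => c i.succ) s v := by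
  unfold dIntegrandT
  have h0 : (if h : 0 < n + 1 then (Fin.cons s v : Fin (n+1) → ℝ) ⟨0, h⟩ else 0) = s := by
    rw [dif_pos (Nat.succ_pos n)]
    rfl
  rw [h0]
  have hofn : (List.ofFn fun m : Fin (n+1) =>
      c m * eM M ((Fin.cons s v : Fin (n+1) → ℝ) m -
        (if h : (m : ℕ) + 1 < n + 1 then (Fin.cons s v : Fin (n+1) → ℝ) ⟨(m : ℕ) + 1, h⟩ else 0)))
      = (c 0 * eM M (s - (if h : 0 < n then v ⟨0, h⟩ else 0))) ::
        (List.ofFn fun m : Fin n =>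
          c m.succ * eM M (v m -
            (if h : (m : ℕ) + 1 < n then v ⟨(m : ℕ) + 1, h⟩ else 0))) := by
    rw [List.ofFn_succ]
    congr 1
    · have e1 : (Fin.cons s v : Fin (n+1) → ℝ) 0 = s := rfl
      have e2 : (if h : ((0 : Fin (n+1)) : ℕ) + 1 < n + 1 then
            (Fin.cons s v : Fin (n+1) → ℝ) ⟨((0 : Fin (n+1)) : ℕ) + 1, h⟩ else 0)
          = (if h : 0 < n then v ⟨0, h⟩ else 0) := by
        by_cases h : 0 < n
        · rw [dif_pos (show ((0 : Fin (n+1)) : ℕ) + 1 < n + 1 by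
              simp only [Fin.val_zero]; omega), dif_pos h]
          rfl
        · rw [dif_neg (show ¬ (((0 : Fin (n+1)) : ℕ) + 1 < n + 1) by
              simp only [Fin.val_zero]; omega), dif_neg h]
      rw [e1, e2]
    · apply congrArg List.ofFn
      funext m
      have e1 : (Fin.cons s v : Fin (n+1) → ℝ) m.succ = v m := rfl
      have e2 : (if h : ((m.succ : Fin (n+1)) : ℕ) + 1 < n + 1 then
            (Fin.cons s v : Fin (n+1) → ℝ) ⟨((m.succ : Fin (n+1)) : ℕ) + 1, h⟩ else 0)
          = (if h : (m : ℕ) + 1 < n then v ⟨(m : ℕ) + 1, h⟩ else 0) := by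
        by_cases h : (m : ℕ) + 1 < n
        · rw [dif_pos (show ((m.succ : Fin (n+1)) : ℕ) + 1 < n + 1 by
              simp only [Fin.val_succ]; omega), dif_pos h]
          rfl
        · rw [dif_neg (show ¬ (((m.succ : Fin (n+1)) : ℕ) + 1 < n + 1) by
              simp only [Fin.val_succ]; omega), dif_neg h]
      rw [e1, e2]
  rw [hofn, List.prod_cons]
  simp only [mul_assoc]

lemma iterInt_dIntegrandT (M : Op) : ∀ (n : ℕ) (c : Fin n → Op) (t : ℝ),
    iterInt n t (dIntegrandT M c t) = Kt M (List.ofFn c) t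
  | 0, c, t => by
    show dIntegrandT M c t ![] = _
    unfold dIntegrandT
    simp only [List.ofFn_zero, List.prod_nil, mul_one, dif_neg (lt_irrefl 0), sub_zero]
    rw [Kt_nil]
  | n+1, c, t => by
    show (∫ s in (0:ℝ)..t, iterInt n s (fun v => dIntegrandT M c t (Fin.cons s v))) = _
    have key : ∀ s : ℝ, iterInt n s (fun v => dIntegrandT M c t (Fin.cons s v))
        = (eM M (t - s) * c 0) * Kt M (List.ofFn fun i => c i.succ) s := by
      intro s
      have h1 : (fun v => dIntegrandT M c t (Fin.cons s v))
          = fun v => (eM M (t - s) * c 0) * dIntegrandT M (fun i => c i.succ) s v := by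
        funext v
        exact dIntegrandT_cons M c t s v
      rw [h1, iterInt_const_mul _ n s _ (dIntegrandT_continuous M _ s),
        iterInt_dIntegrandT M n (fun i => c i.succ) s]
    simp only [key]
    rw [List.ofFn_succ, Kt_cons]

lemma duhamelKernel_eq_Kt (m : ℕ) (M : Op) (c : Fin m → Op) :
    duhamelKernel m M c = Kt M (List.ofFn c) 1 := by
  unfold duhamelKernel
  have h1 : simplex m = simplexT m 1 := rfl
  have h2 : ∀ u, duhamelIntegrand M c u = dIntegrandT M c 1 u :=
    duhamelIntegrand_eq_dIntegrandT M c
  calc ∫ u in simplex m, duhamelIntegrand M c u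
      = ∫ u in simplexT m 1, dIntegrandT M c 1 u := by
        rw [h1]
        exact MeasureTheory.setIntegral_congr_fun (measurableSet_simplexT m 1)
          (fun u _ => h2 u)
    _ = iterInt m 1 (dIntegrandT M c 1) :=
        setIntegral_simplexT m 1 one_pos.le _ (dIntegrandT_continuous M c 1)
    _ = Kt M (List.ofFn c) 1 := iterInt_dIntegrandT M m c 1

lemma duhamelKernel_constJ (m : ℕ) (M' J : Op) :
    duhamelKernel m M' (fun _ => J) = Kt M' (List.replicate m J) 1 := by
  rw [duhamelKernel_eq_Kt, List.ofFn_const]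

end Bridge
section RHS

variable {H : Type*} [NormedAddCommGroup H] [InnerProductSpace ℂ H] [CompleteSpace H]

local notation "Op" => H →L[ℂ] H

/-- the `Kt`-form integrand of the right-hand side -/
noncomputable def GK (M J : Op) {n : ℕ} (α : Fin (n+1) → ℕ) (Φ : Fin n → Op) (t : ℝ)
    (w : Fin n → ℝ) : Op :=
  (List.ofFn fun j : Fin n =>
    Kt M (List.replicate (α j.castSucc) J)
      ((if _h : 0 < (j : ℕ) then
          w ⟨(j : ℕ) - 1, lt_of_le_of_lt (Nat.sub_le _ _) j.isLt⟩ else t) - w j)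
    * Φ j).prod *
  Kt M (List.replicate (α (Fin.last n)) J)
    (if _h : 0 < n then w ⟨n - 1, by omega⟩ else t)

lemma GK_continuous (M J : Op) {n : ℕ} (α : Fin (n+1) → ℕ) (Φ : Fin n → Op) (t : ℝ) :
    Continuous (GK M J α Φ t) := by
  unfold GK
  apply Continuous.mul
  · apply continuous_ofFn_prod
    intro j
    apply Continuous.mul _ continuous_const
    apply (Kt_continuous M _).comp
    apply Continuous.sub _ (continuous_apply j)
    by_cases h : 0 < (j : ℕ)
    · simp only [dif_pos h]
      exact continuous_apply _
    · simp only [dif_neg h]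
      exact continuous_const
  · apply (Kt_continuous M _).comp
    by_cases h : 0 < n
    · simp only [dif_pos h]
      exact continuous_apply _
    · simp only [dif_neg h]
      exact continuous_const

lemma GK_cons (M J : Op) {n : ℕ} (α : Fin (n+2) → ℕ) (Φ : Fin (n+1) → Op) (t s : ℝ)
    (v : Fin n → ℝ) :
    GK M J α Φ t (Fin.cons s v)
      = (Kt M (List.replicate (α 0) J) (t - s) * Φ 0)
        * GK M J (fun i => α i.succ) (fun i => Φ i.succ) s v := by
  unfold GK
  rw [List.ofFn_succ, List.prod_cons]
  have head : (Kt M (List.replicate (α ((0 : Fin (n+1)).castSucc)) J)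
        ((if _h : 0 < (((0 : Fin (n+1))) : ℕ) then
          (Fin.cons s v : Fin (n+1) → ℝ)
            ⟨(((0 : Fin (n+1))) : ℕ) - 1, lt_of_le_of_lt (Nat.sub_le _ _) (0 : Fin (n+1)).isLt⟩
          else t) - (Fin.cons s v : Fin (n+1) → ℝ) (0 : Fin (n+1))) * Φ 0)
      = Kt M (List.replicate (α 0) J) (t - s) * Φ 0 := by
    rw [dif_neg (by simp : ¬ 0 < (((0 : Fin (n+1))) : ℕ))]
    rfl
  have tail : (fun j : Fin n =>
      Kt M (List.replicate (α (j.succ.castSucc)) J)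
        ((if _h : 0 < ((j.succ : Fin (n+1)) : ℕ) then
            (Fin.cons s v : Fin (n+1) → ℝ)
              ⟨((j.succ : Fin (n+1)) : ℕ) - 1,
                lt_of_le_of_lt (Nat.sub_le _ _) (j.succ : Fin (n+1)).isLt⟩
          else t) - (Fin.cons s v : Fin (n+1) → ℝ) j.succ) * Φ j.succ)
      = fun j : Fin n =>
        Kt M (List.replicate ((fun i => α i.succ) j.castSucc) J)
          ((if _h : 0 < (j : ℕ) then
              v ⟨(j : ℕ) - 1, lt_of_le_of_lt (Nat.sub_le _ _) j.isLt⟩ else s) - v j)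
        * (fun i => Φ i.succ) j := by
    funext j
    have harg : (if _h : 0 < ((j.succ : Fin (n+1)) : ℕ) then
          (Fin.cons s v : Fin (n+1) → ℝ)
            ⟨((j.succ : Fin (n+1)) : ℕ) - 1,
              lt_of_le_of_lt (Nat.sub_le _ _) (j.succ : Fin (n+1)).isLt⟩
        else t)
        = (if _h : 0 < (j : ℕ) then
            v ⟨(j : ℕ) - 1, lt_of_le_of_lt (Nat.sub_le _ _) j.isLt⟩ else s) := by
      rw [dif_pos (by simp [Fin.val_succ] : 0 < ((j.succ : Fin (n+1)) : ℕ))]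
      by_cases hj : 0 < (j : ℕ)
      · rw [dif_pos hj]
        have hidx : (⟨((j.succ : Fin (n+1)) : ℕ) - 1,
              lt_of_le_of_lt (Nat.sub_le _ _) (j.succ : Fin (n+1)).isLt⟩ : Fin (n+1))
            = ⟨((j : ℕ) - 1) + 1, by omega⟩ := Fin.ext (by simp [Fin.val_succ]; omega)
        rw [hidx]
        exact cons_mk_succ s v ((j : ℕ) - 1) (by omega)
      · rw [dif_neg hj]
        have hidx : (⟨((j.succ : Fin (n+1)) : ℕ) - 1,
              lt_of_le_of_lt (Nat.sub_le _ _) (j.succ : Fin (n+1)).isLt⟩ : Fin (n+1))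
            = ⟨0, Nat.succ_pos n⟩ := Fin.ext (by simp [Fin.val_succ]; omega)
        rw [hidx]
        rfl
    rw [harg]
    rfl
  have last : Kt M (List.replicate (α (Fin.last (n+1))) J)
        (if _h : 0 < n + 1 then
          (Fin.cons s v : Fin (n+1) → ℝ) ⟨n + 1 - 1, by omega⟩ else t)
      = Kt M (List.replicate ((fun i => α i.succ) (Fin.last n)) J)
        (if _h : 0 < n then v ⟨n - 1, by omega⟩ else s) := by
    rw [dif_pos (Nat.succ_pos n)]
    have hlast : α (Fin.last (n+1)) = (fun i => α i.succ) (Fin.last n) := rfl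
    rw [hlast]
    congr 1
    by_cases hn : 0 < n
    · rw [dif_pos hn]
      have hidx : (⟨n + 1 - 1, by omega⟩ : Fin (n+1)) = ⟨(n - 1) + 1, by omega⟩ :=
        Fin.mk_eq_mk.mpr (by omega)
      rw [hidx]
      exact cons_mk_succ s v (n - 1) (by omega)
    · rw [dif_neg hn]
      have hidx : (⟨n + 1 - 1, by omega⟩ : Fin (n+1)) = ⟨0, Nat.succ_pos n⟩ :=
        Fin.mk_eq_mk.mpr (by omega)
      rw [hidx]
      rfl
  rw [head, tail, last, mul_assoc]

lemma RKt_eq_iterInt (M J : Op) : ∀ (n : ℕ) (α : Fin (n+1) → ℕ) (Φ : Fin n → Op) (t : ℝ),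
    0 ≤ t →
    iterInt n t (GK M J α Φ t)
      = RKt M J (List.ofFn fun j => (α j.castSucc, Φ j)) (α (Fin.last n)) t
  | 0, α, Φ, t, ht => by
    show GK M J α Φ t ![] = _
    unfold GK
    rw [List.ofFn_zero, List.prod_nil, one_mul, dif_neg (lt_irrefl 0), List.ofFn_zero]
    rfl
  | n+1, α, Φ, t, ht => by
    show (∫ s in (0:ℝ)..t, iterInt n s (fun v => GK M J α Φ t (Fin.cons s v))) = _
    have key : ∀ s : ℝ, iterInt n s (fun v => GK M J α Φ t (Fin.cons s v))
        = (Kt M (List.replicate (α 0) J) (t - s) * Φ 0)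
          * iterInt n s (GK M J (fun i => α i.succ) (fun i => Φ i.succ) s) := by
      intro s
      have h1 : (fun v => GK M J α Φ t (Fin.cons s v))
          = fun v => (Kt M (List.replicate (α 0) J) (t - s) * Φ 0)
            * GK M J (fun i => α i.succ) (fun i => Φ i.succ) s v := by
        funext v
        exact GK_cons M J α Φ t s v
      rw [h1, iterInt_const_mul _ n s _ (GK_continuous M J _ _ s)]
    simp only [key]
    rw [List.ofFn_succ]
    show _ = ∫ s in (0:ℝ)..t,
      (Kt M (List.replicate ((α ((0:Fin (n+1)).castSucc), Φ 0).1) J) (t - s)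
        * ((α ((0:Fin (n+1)).castSucc), Φ 0).2))
      * RKt M J (List.ofFn fun j : Fin n => (α (j.succ.castSucc), Φ j.succ))
          (α (Fin.last (n+1))) s
    apply intervalIntegral.integral_congr
    intro s hs
    rw [Set.uIcc_of_le ht] at hs
    dsimp only
    rw [RKt_eq_iterInt M J n (fun i => α i.succ) (fun i => Φ i.succ) s hs.1]
    rfl

end RHS
section Comb

variable {H : Type*} [NormedAddCommGroup H] [InnerProductSpace ℂ H] [CompleteSpace H]

local notation "Op" => H →L[ℂ] H

lemma sigmaIdx_zero {n : ℕ} (α : Fin (n+1) → ℕ) : sigmaIdx α 0 = α 0 + 1 := by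
  unfold sigmaIdx
  have h : Finset.Iic (0 : Fin (n+1)) = {0} := by
    ext i
    simp [Fin.le_zero_iff]
  rw [h, Finset.sum_singleton]
  simp

lemma Iic_succ_eq {n : ℕ} (k : Fin (n+1)) :
    Finset.Iic (k.succ : Fin (n+2)) =
      insert 0 ((Finset.Iic k).map (Fin.succEmb (n+1))) := by
  ext i
  simp only [Finset.mem_Iic, Finset.mem_insert, Finset.mem_map]
  refine Fin.cases ?_ (fun i' => ?_) i
  · simp [Fin.zero_le]
  · constructor
    · intro h
      right
      exact ⟨i', by rwa [Fin.succ_le_succ_iff] at h, rfl⟩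
    · rintro (h | ⟨j, hj, hji⟩)
      · exact absurd h (Fin.succ_ne_zero i')
      · have : j = i' := by
          apply Fin.succ_injective
          exact hji
        rw [← this] at *
        rw [Fin.succ_le_succ_iff]
        exact hj

lemma sigmaIdx_succ {n : ℕ} (α : Fin (n+2) → ℕ) (k : Fin (n+1)) :
    sigmaIdx α k.succ = α 0 + 1 + sigmaIdx (fun i => α i.succ) k := by
  unfold sigmaIdx
  dsimp only
  rw [Iic_succ_eq k, Finset.sum_insert (by
    simp only [Finset.mem_map]
    rintro ⟨j, _, hj⟩
    exact Fin.succ_ne_zero j hj), Finset.sum_map]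
  have hval : ((k.succ : Fin (n+2)) : ℕ) = (k : ℕ) + 1 := rfl
  have hemb : ∀ j ∈ Finset.Iic k, α (Fin.succEmb (n+1) j) = α j.succ := fun _ _ => rfl
  rw [Finset.sum_congr rfl hemb, hval]
  omega

lemma sigmaIdx_ge {n : ℕ} (α : Fin (n+1) → ℕ) (j : Fin (n+1)) :
    α 0 + 1 ≤ sigmaIdx α j := by
  unfold sigmaIdx
  have h : α 0 ≤ ∑ i ∈ Finset.Iic j, α i :=
    Finset.single_le_sum (fun i _ => Nat.zero_le (α i))
      (Finset.mem_Iic.mpr (Fin.zero_le j))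
  omega

lemma ofFn_eq_blockConcat : ∀ (n : ℕ) (J : Op) (Φ : Fin n → Op) (α : Fin (n+1) → ℕ)
    (N : ℕ) (_hN : N + 1 = sigmaIdx α (Fin.last n)) (c : Fin N → Op)
    (_hc1 : ∀ (j : Fin n) (m : Fin N), (m : ℕ) + 1 = sigmaIdx α j.castSucc → c m = Φ j)
    (_hc2 : ∀ m : Fin N, (∀ j : Fin n, (m : ℕ) + 1 ≠ sigmaIdx α j.castSucc) → c m = J),
    List.ofFn c = blockConcat J (List.ofFn fun j => (α j.castSucc, Φ j)) (α (Fin.last n))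
  | 0, J, Φ, α, N, hN, c, hc1, hc2 => by
    have hval : ∀ m : Fin N, c m = J := fun m => hc2 m (fun j => j.elim0)
    have hN' : N = α 0 := by
      have h0 : sigmaIdx α (Fin.last 0) = α 0 + 1 := by
        rw [show Fin.last 0 = 0 from rfl, sigmaIdx_zero]
      omega
    rw [List.ofFn_zero]
    show List.ofFn c = List.replicate (α (Fin.last 0)) J
    rw [show c = fun _ => J from funext hval, List.ofFn_const,
      show Fin.last 0 = 0 from rfl, hN']
  | n+1, J, Φ, α, N, hN, c, hc1, hc2 => by
    have hσpos : 1 ≤ sigmaIdx (fun i => α i.succ) (Fin.last n) :=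
      le_trans (by omega) (sigmaIdx_ge (fun i => α i.succ) (Fin.last n))
    have hsplit : N = (α 0 + 1) + (sigmaIdx (fun i => α i.succ) (Fin.last n) - 1) := by
      have h1 : sigmaIdx α (Fin.last (n+1)) = α 0 + 1 + sigmaIdx (fun i => α i.succ)
          (Fin.last n) := by
        rw [show Fin.last (n+1) = (Fin.last n).succ from rfl]
        exact sigmaIdx_succ α (Fin.last n)
      omega
    have h1 : sigmaIdx α (Fin.last (n+1)) = α 0 + 1 + sigmaIdx (fun i => α i.succ)
        (Fin.last n) := by
      rw [show Fin.last (n+1) = (Fin.last n).succ from rfl]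
      exact sigmaIdx_succ α (Fin.last n)
    obtain ⟨N', rfl⟩ : ∃ N', N = (α 0 + 1) + N' :=
      ⟨sigmaIdx (fun i => α i.succ) (Fin.last n) - 1, hsplit⟩
    have hN'succ : N' + 1 = sigmaIdx (fun i => α i.succ) (Fin.last n) := by omega
    rw [List.ofFn_add]
    -- first block
    have hfirst : (List.ofFn fun i : Fin (α 0 + 1) => c (Fin.castAdd N' i))
        = List.replicate (α 0) J ++ [Φ 0] := by
      rw [List.ofFn_succ']
      have hA : (List.ofFn fun i : Fin (α 0) => c (Fin.castAdd N' i.castSucc))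
          = List.replicate (α 0) J := by
        have : (fun i : Fin (α 0) => c (Fin.castAdd N' i.castSucc)) = fun _ => J := by
          funext i
          apply hc2
          intro j
          have hge := sigmaIdx_ge α j.castSucc
          have hlt : ((Fin.castAdd N' i.castSucc : Fin ((α 0 + 1) + N')) : ℕ) < α 0 := by
            simp only [Fin.coe_castAdd, Fin.coe_castSucc]
            exact i.isLt
          omega
        rw [this, List.ofFn_const]
      have hB : c (Fin.castAdd N' (Fin.last (α 0))) = Φ 0 := by
        apply hc1 0
        have hval : ((Fin.castAdd N' (Fin.last (α 0)) : Fin ((α 0 + 1) + N')) : ℕ) = α 0 := rfl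
        rw [hval, show (0 : Fin (n+1)).castSucc = (0 : Fin (n+2)) from rfl, sigmaIdx_zero]
      rw [hA, hB, List.concat_eq_append]
    rw [show (List.ofFn fun i : Fin (α 0 + 1) => c (Fin.castLE (Nat.le_add_right _ _) i)) = List.replicate (α 0) J ++ [Φ 0] from hfirst]
    -- second block via induction hypothesis
    have hsecond : (List.ofFn fun i : Fin N' => c (Fin.natAdd (α 0 + 1) i))
        = blockConcat J (List.ofFn fun j : Fin n =>
            ((fun i => α i.succ) j.castSucc, Φ j.succ)) ((fun i => α i.succ) (Fin.last n)) := by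
      apply ofFn_eq_blockConcat n J (fun i => Φ i.succ) (fun i => α i.succ) N' hN'succ
      · intro j m hm
        apply hc1 j.succ
        have hval : ((Fin.natAdd (α 0 + 1) m : Fin ((α 0 + 1) + N')) : ℕ) = α 0 + 1 + m := rfl
        rw [hval, show (j.succ).castSucc = (j.castSucc).succ from rfl, sigmaIdx_succ]
        omega
      · intro m hm
        apply hc2
        intro j
        have hval : ((Fin.natAdd (α 0 + 1) m : Fin ((α 0 + 1) + N')) : ℕ) = α 0 + 1 + m := rfl
        rw [hval]
        refine Fin.cases ?_ (fun j' => ?_) j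
        · rw [show (0 : Fin (n+1)).castSucc = (0 : Fin (n+2)) from rfl, sigmaIdx_zero]
          omega
        · rw [show (j'.succ).castSucc = (j'.castSucc).succ from rfl, sigmaIdx_succ]
          have := hm j'
          omega
    rw [hsecond]
    -- right-hand side
    rw [List.ofFn_succ]
    show _ = List.replicate ((α ((0 : Fin (n+1)).castSucc), Φ 0).1) J ++
      (α ((0 : Fin (n+1)).castSucc), Φ 0).2 ::
        blockConcat J (List.ofFn fun j : Fin n => (α (j.succ.castSucc), Φ j.succ))
          (α (Fin.last (n+1)))
    rw [show (α ((0 : Fin (n+1)).castSucc), Φ 0).1 = α 0 from rfl]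
    rw [List.append_assoc, List.singleton_append]
    rfl

end Comb
section Final

variable {H : Type*} [NormedAddCommGroup H] [InnerProductSpace ℂ H] [CompleteSpace H]

local notation "Op" => H →L[ℂ] H

lemma ofFn_prod_smul : ∀ {n : ℕ} (r : Fin n → ℝ) (f : Fin n → Op),
    (∏ j, r j) • (List.ofFn f).prod = (List.ofFn fun j => r j • f j).prod
  | 0, r, f => by simp
  | n+1, r, f => by
    rw [List.ofFn_succ, List.ofFn_succ, List.prod_cons, List.prod_cons, Fin.prod_univ_succ,
      mul_smul, ← mul_smul_comm, ofFn_prod_smul (fun i => r i.succ) (fun i => f i.succ),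
      ← smul_mul_assoc]

lemma smul_duhamelKernel_constJ (M J : Op) (a : ℕ) (x : ℝ) (hx : 0 ≤ x) :
    x ^ a • duhamelKernel a (x • M) (fun _ => J) = Kt M (List.replicate a J) x := by
  rw [duhamelKernel_constJ]
  have h := Kt_scale M (List.replicate a J) x 1 hx
  rw [mul_one, List.length_replicate] at h
  exact h.symm

lemma integrand_eq_GK (n : ℕ) (hn : 1 ≤ n) (M J : Op) (Φ : Fin n → Op)
    (α : Fin (n + 1) → ℕ) {w : Fin n → ℝ} (hw : w ∈ simplex n) :
    ((∏ j : Fin n,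
        ((if _h : 0 < (j : ℕ) then
            w ⟨(j : ℕ) - 1, lt_of_le_of_lt (Nat.sub_le _ _) j.isLt⟩
          else 1) - w j) ^ α (Fin.castSucc j)) *
        (w ⟨n - 1, by omega⟩) ^ α (Fin.last n)) •
      ((List.ofFn fun j : Fin n =>
          duhamelKernel (α (Fin.castSucc j))
            ((((if _h : 0 < (j : ℕ) then
                  w ⟨(j : ℕ) - 1, lt_of_le_of_lt (Nat.sub_le _ _) j.isLt⟩
                else 1) - w j : ℝ)) • M)
            (fun _ => J) * Φ j).prod *
        duhamelKernel (α (Fin.last n)) ((w ⟨n - 1, by omega⟩ : ℝ) • M) (fun _ => J))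
      = GK M J α Φ 1 w := by
  have hx : ∀ j : Fin n, 0 ≤ (if _h : 0 < (j : ℕ) then
      w ⟨(j : ℕ) - 1, lt_of_le_of_lt (Nat.sub_le _ _) j.isLt⟩ else 1) - w j := by
    intro j
    by_cases h : 0 < (j : ℕ)
    · rw [dif_pos h]
      have hle : (⟨(j : ℕ) - 1, lt_of_le_of_lt (Nat.sub_le _ _) j.isLt⟩ : Fin n) ≤ j := by
        rw [Fin.le_def]
        simp only [Fin.val_mk]
        omega
      have := hw.2 _ j hle
      linarith
    · rw [dif_neg h]
      have := (hw.1 j).2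
      linarith
  have hy : 0 ≤ w ⟨n - 1, by omega⟩ := (hw.1 _).1
  unfold GK
  rw [dif_pos (show 0 < n by omega)]
  rw [mul_smul, ← mul_smul_comm, ← smul_mul_assoc]
  congr 1
  · rw [ofFn_prod_smul]
    apply congrArg List.prod
    apply congrArg List.ofFn
    funext j
    rw [← smul_mul_assoc, smul_duhamelKernel_constJ M J _ _ (hx j)]
  · exact smul_duhamelKernel_constJ M J _ _ hy

end Final


/-- The change-of-variables identity for Duhamel simplex kernels with insertions:
with `N = σ_{n+1} − 1` and `c_m = Φ_j` if `m = σ_j` (for some `j ≤ n`), `c_m = J` otherwise,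
`K^{(N)}(M : c₁,…,c_N)` equals the integral over `Δ_n` of
`(∏_j (w_{j−1}−w_j)^{α_j}) w_n^{α_{n+1}} K^{(α₁)}((1−w₁)M, J) Φ₁ ⋯ Φ_n K^{(α_{n+1})}(w_n M, J)`
(with `w₀ = 1`, and each inner kernel having `M` scaled by the increment of `w` but the
unscaled `J`'s). -/
theorem duhamelKernel_change_of_variables
    (n : ℕ) (hn : 1 ≤ n)
    (M J : H →L[ℂ] H) (hM : IsSelfAdjoint M) (hJ : IsSelfAdjoint J)
    (Φ : Fin n → (H →L[ℂ] H))
    (α : Fin (n + 1) → ℕ) (hα : ∀ j, 1 ≤ α j)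
    (N : ℕ) (hN : N + 1 = sigmaIdx α (Fin.last n))
    (c : Fin N → (H →L[ℂ] H))
    (hc1 : ∀ (j : Fin n) (m : Fin N), (m : ℕ) + 1 = sigmaIdx α (Fin.castSucc j) → c m = Φ j)
    (hc2 : ∀ m : Fin N, (∀ j : Fin n, (m : ℕ) + 1 ≠ sigmaIdx α (Fin.castSucc j)) → c m = J) :
    duhamelKernel N M c =
      ∫ w in simplex n,
        ((∏ j : Fin n,
            ((if _h : 0 < (j : ℕ) then
                w ⟨(j : ℕ) - 1, lt_of_le_of_lt (Nat.sub_le _ _) j.isLt⟩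
              else 1) - w j) ^ α (Fin.castSucc j)) *
            (w ⟨n - 1, by omega⟩) ^ α (Fin.last n)) •
          ((List.ofFn fun j : Fin n =>
              duhamelKernel (α (Fin.castSucc j))
                ((((if _h : 0 < (j : ℕ) then
                      w ⟨(j : ℕ) - 1, lt_of_le_of_lt (Nat.sub_le _ _) j.isLt⟩
                    else 1) - w j : ℝ)) • M)
                (fun _ => J) * Φ j).prod *
            duhamelKernel (α (Fin.last n)) ((w ⟨n - 1, by omega⟩ : ℝ) • M) (fun _ => J)) := by
  rw [duhamelKernel_eq_Kt, ofFn_eq_blockConcat n J Φ α N hN c hc1 hc2,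
    Kt_blockConcat M J _ _ 1 one_pos.le, ← RKt_eq_iterInt M J n α Φ 1 one_pos.le,
    ← setIntegral_simplexT n 1 one_pos.le _ (GK_continuous M J α Φ 1)]
  rw [show simplex n = simplexT n 1 from rfl]
  exact MeasureTheory.setIntegral_congr_fun (measurableSet_simplexT n 1)
    (fun w hw => (integrand_eq_GK n hn M J Φ α hw).symm)
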